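/- Let A ⊆ ℝ^d be a finite set with |A| = m. Assume that A is proper d-dimensional, i.e., A is not contained in any affine hyperplane of ℝ^d. Then the sumset A + A satisfies |A + A| ≥ m(d+1) − d(d+1)/2. -/

import Mathlib

open Pointwise Module

variable {d : ℕ}

-- extreme point: maximizer of sum of squares is not in hull of the rest
lemma exists_extreme_pt (A : Finset (Fin d → ℝ)) (hA : A.Nonempty) :
    ∃ a ∈ A, a ∉ convexHull ℝ ((A.erase a : Finset (Fin d → ℝ)) : Set (Fin d → ℝ)) := by
  obtain ⟨a, haA, hmax⟩ := A.exists_max_image (fun x => ∑ i, x i ^ 2) hA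
  refine ⟨a, haA, fun hmem => ?_⟩
  rw [Finset.convexHull_eq] at hmem
  obtain ⟨w, hw0, hw1, hcm⟩ := hmem
  rw [Finset.centerMass_eq_of_sum_1 _ _ hw1] at hcm
  -- hcm : ∑ y in A.erase a, w y • id y = a
  set s := A.erase a with hs
  have hBle : ∀ y ∈ s, (∑ i, y i * a i) ≤ ∑ i, a i ^ 2 := by
    intro y hy
    have h1 : ∀ i, y i * a i ≤ (y i ^ 2 + a i ^ 2) / 2 := by
      intro i; nlinarith [sq_nonneg (y i - a i)]
    have h2 : (∑ i, 2 * (y i * a i)) ≤ ∑ i, (y i ^ 2 + a i ^ 2) :=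
      Finset.sum_le_sum fun i _ => by nlinarith [sq_nonneg (y i - a i)]
    have h3 : (∑ i, y i ^ 2) ≤ ∑ i, a i ^ 2 := hmax y (A.erase_subset a hy)
    rw [← Finset.mul_sum, Finset.sum_add_distrib] at h2
    linarith
  have hai : ∀ i, a i = ∑ y ∈ s, w y * y i := by
    intro i
    have := congrFun hcm i
    simpa [Finset.sum_apply] using this.symm
  have hQa : (∑ i, a i ^ 2) = ∑ y ∈ s, w y * (∑ i, y i * a i) := by
    calc (∑ i, a i ^ 2) = ∑ i, (∑ y ∈ s, w y * y i) * a i := by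
          refine Finset.sum_congr rfl fun i _ => ?_
          rw [← hai i]; ring
    _ = ∑ i, ∑ y ∈ s, w y * (y i * a i) := by
          refine Finset.sum_congr rfl fun i _ => ?_
          rw [Finset.sum_mul]; exact Finset.sum_congr rfl fun y _ => by ring
    _ = ∑ y ∈ s, ∑ i, w y * (y i * a i) := Finset.sum_comm
    _ = ∑ y ∈ s, w y * (∑ i, y i * a i) := by
          refine Finset.sum_congr rfl fun y _ => ?_
          rw [Finset.mul_sum]
  -- each term with positive weight must achieve equality
  have hzero : ∑ y ∈ s, w y * ((∑ i, a i ^ 2) - ∑ i, y i * a i) = 0 := by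
    have : ∑ y ∈ s, w y * ((∑ i, a i ^ 2) - ∑ i, y i * a i)
        = (∑ y ∈ s, w y) * (∑ i, a i ^ 2) - ∑ y ∈ s, w y * (∑ i, y i * a i) := by
      rw [Finset.sum_mul, ← Finset.sum_sub_distrib]
      exact Finset.sum_congr rfl fun y _ => by ring
    rw [this, hw1, one_mul, hQa, sub_self]
  have hterm : ∀ y ∈ s, w y * ((∑ i, a i ^ 2) - ∑ i, y i * a i) = 0 :=
    (Finset.sum_eq_zero_iff_of_nonneg (fun y hy =>
      mul_nonneg (hw0 y hy) (sub_nonneg.2 (hBle y hy)))).1 hzero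
  obtain ⟨y, hy, hwy⟩ : ∃ y ∈ s, w y ≠ 0 := by
    by_contra h
    push_neg at h
    rw [Finset.sum_eq_zero h] at hw1
    norm_num at hw1
  have hBeq : (∑ i, y i * a i) = ∑ i, a i ^ 2 := by
    have := hterm y hy
    rcases mul_eq_zero.1 this with h | h
    · exact absurd h hwy
    · linarith
  have hQy : (∑ i, y i ^ 2) ≤ ∑ i, a i ^ 2 := hmax y (A.erase_subset a hy)
  have hdist : (∑ i, (y i - a i) ^ 2) ≤ 0 := by
    have : (∑ i, (y i - a i) ^ 2)
        = (∑ i, y i ^ 2) - 2 * (∑ i, y i * a i) + ∑ i, a i ^ 2 := by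
      rw [Finset.mul_sum, ← Finset.sum_sub_distrib, ← Finset.sum_add_distrib]
      exact Finset.sum_congr rfl fun i _ => by ring
    rw [this, hBeq]; linarith
  have hya : y = a := by
    funext i
    have h0 : ∀ i ∈ (Finset.univ : Finset (Fin d)), (0:ℝ) ≤ (y i - a i) ^ 2 :=
      fun i _ => sq_nonneg _
    have := (Finset.sum_eq_zero_iff_of_nonneg h0).1 (le_antisymm hdist (Finset.sum_nonneg h0)) i
      (Finset.mem_univ i)
    have : y i - a i = 0 := by nlinarith
    linarith
  exact (Finset.ne_of_mem_erase hy) hya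

-- core separation lemma: no point of A' has φ-value below φ a
lemma no_below (A' : Finset (Fin d → ℝ)) (a : Fin d → ℝ)
    (f : (Fin d → ℝ) →L[ℝ] ℝ) (c : ℝ) (hfa : f a < c)
    (hfA : ∀ y ∈ A', c < f y)
    (φ : Module.Dual ℝ (Fin d → ℝ))
    (hφ : ∀ x ∈ A', (2:ℝ)⁻¹ • (a + x) ∉ convexHull ℝ (A' : Set (Fin d → ℝ)) → φ x = φ a)
    (y₀ : Fin d → ℝ) (hy₀ : y₀ ∈ A') (hlt : φ y₀ < φ a) : False := by
  classical
  set K := convexHull ℝ (A' : Set (Fin d → ℝ)) with hK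
  set β₀ := c - f a with hβ₀
  have hβ₀pos : 0 < β₀ := by simp [hβ₀]; linarith
  set g : ℝ → (Fin d → ℝ) → ℝ := fun t y => (f y - f a) + t * (φ y - φ a) with hg
  have claimA : ∀ t : ℝ, (∀ y ∈ A', 0 < g t y) → ∀ y ∈ A', β₀ ≤ g t y := by
    intro t ht
    obtain ⟨x', hx'A, hx'min⟩ := A'.exists_min_image (g t) ⟨y₀, hy₀⟩
    have hlin : IsLinearMap ℝ (fun z : Fin d → ℝ => f z + t * φ z) := by
      constructor
      · intro u v; simp [map_add]; ring
      · intro r u; simp [map_smul, smul_eq_mul]; ring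
    have hmid : (2:ℝ)⁻¹ • (a + x') ∉ K := by
      intro hmem
      have hsub : K ⊆ {z | f x' + t * φ x' ≤ f z + t * φ z} := by
        rw [hK]
        apply convexHull_min _ (convex_halfSpace_ge hlin _)
        intro z hz
        have := hx'min z hz
        simp only [hg] at this
        simp only [Set.mem_setOf_eq]
        linarith
      have h1 := hsub hmem
      simp only [Set.mem_setOf_eq, map_smul, map_add, smul_eq_mul] at h1
      have h2 := ht x' hx'A
      simp only [hg] at h2
      nlinarith
    have hφx' : φ x' = φ a := hφ x' hx'A hmid
    have h3 : β₀ ≤ g t x' := by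
      have := hfA x' hx'A
      simp only [hg, hφx']
      simp [hβ₀]; linarith
    intro y hy
    exact le_trans h3 (hx'min y hy)
  -- the set of constraints with φ-value below φ a
  set P := A'.filter (fun y => φ y < φ a) with hP
  have hy₀P : y₀ ∈ P := by rw [hP, Finset.mem_filter]; exact ⟨hy₀, hlt⟩
  set r : (Fin d → ℝ) → ℝ := fun y => (f y - f a) / (φ a - φ y) with hr
  obtain ⟨yp, hypP, hypmin⟩ := P.exists_min_image r ⟨y₀, hy₀P⟩
  have hypA : yp ∈ A' := (Finset.mem_filter.1 hypP).1
  have hypφ : φ yp < φ a := (Finset.mem_filter.1 hypP).2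
  have hden : 0 < φ a - φ yp := by linarith
  have hnum : 0 < f yp - f a := by have := hfA yp hypA; linarith
  set tp := r yp with htp
  have htppos : 0 < tp := div_pos hnum hden
  have hS : ∀ t : ℝ, 0 ≤ t → t < tp → ∀ y ∈ A', 0 < g t y := by
    intro t ht0 htlt y hy
    by_cases hyP : φ y < φ a
    · have hyP' : y ∈ P := Finset.mem_filter.2 ⟨hy, hyP⟩
      have hry : tp ≤ r y := hypmin y hyP'
      have hdeny : 0 < φ a - φ y := by linarith
      have : t < r y := lt_of_lt_of_le htlt hry
      rw [hr, lt_div_iff₀ hdeny] at this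
      simp only [hg]; nlinarith
    · push_neg at hyP
      have := hfA y hy
      simp only [hg]
      nlinarith
  set δ := min tp (β₀ / (φ a - φ yp)) / 2 with hδ
  have hδpos : 0 < δ := by
    apply div_pos _ two_pos
    exact lt_min htppos (div_pos hβ₀pos hden)
  set t := tp - δ with ht
  have htS : ∀ y ∈ A', 0 < g t y := by
    apply hS
    · have : δ ≤ tp / 2 := by
        rw [hδ]
        have := min_le_left tp (β₀ / (φ a - φ yp))
        linarith
      rw [ht]; linarith
    · rw [ht]; linarith
  have hA := claimA t htS yp hypA
  have heq : f yp - f a = tp * (φ a - φ yp) := by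
    rw [htp, hr, div_mul_cancel₀ _ (ne_of_gt hden)]
  have hgval : g t yp = δ * (φ a - φ yp) := by
    simp only [hg, ht]; rw [heq]; ring
  have hsmall : δ * (φ a - φ yp) ≤ β₀ / 2 := by
    have h1 : δ ≤ (β₀ / (φ a - φ yp)) / 2 := by
      rw [hδ]
      have := min_le_right tp (β₀ / (φ a - φ yp))
      linarith
    calc δ * (φ a - φ yp) ≤ ((β₀ / (φ a - φ yp)) / 2) * (φ a - φ yp) := by
          exact mul_le_mul_of_nonneg_right h1 (le_of_lt hden)
    _ = β₀ / 2 := by field_simp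
  rw [hgval] at hA
  linarith

-- the set of "new midpoints" affinely spans all of A
lemma span_G (A G₀ : Finset (Fin d → ℝ)) (a : Fin d → ℝ) (haA : a ∈ A)
    (haK : a ∉ convexHull ℝ ((A.erase a : Finset (Fin d → ℝ)) : Set (Fin d → ℝ)))
    (hG₀ : ∀ x, x ∈ G₀ ↔ x ∈ A ∧
      (2:ℝ)⁻¹ • (a + x) ∉ convexHull ℝ ((A.erase a : Finset (Fin d → ℝ)) : Set (Fin d → ℝ))) :
    (A : Set (Fin d → ℝ)) ⊆ (affineSpan ℝ (G₀ : Set (Fin d → ℝ)) : Set (Fin d → ℝ)) := by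
  classical
  set K := convexHull ℝ ((A.erase a : Finset (Fin d → ℝ)) : Set (Fin d → ℝ)) with hKdef
  intro x₀ hx₀
  by_contra hx₀T
  have haG : a ∈ G₀ := by
    rw [hG₀]
    refine ⟨haA, ?_⟩
    have : (2:ℝ)⁻¹ • (a + a) = a := by
      rw [← two_smul ℝ a, smul_smul]; norm_num
    rw [this]; exact haK
  have haT : a ∈ affineSpan ℝ (G₀ : Set (Fin d → ℝ)) := subset_affineSpan ℝ _ haG
  have hx₀a : x₀ ≠ a := fun h => hx₀T (h ▸ haT)
  have hx₀e : x₀ ∈ A.erase a := Finset.mem_erase.2 ⟨hx₀a, hx₀⟩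
  set W := (affineSpan ℝ (G₀ : Set (Fin d → ℝ))).direction with hW
  have hv : x₀ - a ∉ W := by
    intro h
    have := AffineSubspace.vadd_mem_of_mem_direction h haT
    rw [show (x₀ - a) +ᵥ a = x₀ by simp] at this
    exact hx₀T this
  obtain ⟨φ, hφv, hφW⟩ := W.exists_dual_map_eq_bot_of_notMem hv inferInstance
  have hφW' : ∀ w ∈ W, φ w = 0 := by
    intro w hw
    have : φ w ∈ W.map φ := Submodule.mem_map_of_mem hw
    rw [hφW] at this
    simpa using this
  have hφG : ∀ x ∈ G₀, φ x = φ a := by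
    intro x hx
    have hxT : x ∈ affineSpan ℝ (G₀ : Set (Fin d → ℝ)) := subset_affineSpan ℝ _ hx
    have : x - a ∈ W := AffineSubspace.vsub_mem_direction hxT haT
    have := hφW' _ this
    rw [map_sub] at this
    linarith
  -- separation
  have hKc : Convex ℝ K := convex_convexHull ℝ _
  have hKcl : IsClosed K := (A.erase a).finite_toSet.isClosed_convexHull ℝ
  obtain ⟨f, c, hfa, hfK⟩ := geometric_hahn_banach_point_closed hKc hKcl haK
  have hfA : ∀ y ∈ A.erase a, c < f y := fun y hy =>
    hfK y (subset_convexHull ℝ _ hy)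
  have hφ3 : ∀ x ∈ A.erase a, (2:ℝ)⁻¹ • (a + x) ∉ convexHull ℝ ((A.erase a : Finset (Fin d → ℝ)) : Set (Fin d → ℝ)) → φ x = φ a := by
    intro x hx hm
    exact hφG x ((hG₀ x).2 ⟨Finset.mem_of_mem_erase hx, hm⟩)
  have hφx₀ : φ x₀ ≠ φ a := by
    intro h
    apply hφv
    rw [map_sub, h, sub_self]
  rcases lt_or_gt_of_ne hφx₀ with h | h
  · exact no_below (A.erase a) a f c hfa hfA φ hφ3 x₀ hx₀e h
  · refine no_below (A.erase a) a f c hfa hfA (-φ) ?_ x₀ hx₀e ?_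
    · intro x hx hm
      have := hφ3 x hx hm
      simp [this]
    · simpa using h

-- cardinality at least finrank of vectorSpan + 1
lemma card_ge_finrank_succ (G : Finset (Fin d → ℝ)) (a : Fin d → ℝ) (ha : a ∈ G) :
    Module.finrank ℝ (vectorSpan ℝ (G : Set (Fin d → ℝ))) + 1 ≤ G.card := by
  classical
  have hvs : vectorSpan ℝ (G : Set (Fin d → ℝ))
      = Submodule.span ℝ ((· -ᵥ a) '' (G : Set (Fin d → ℝ))) :=
    vectorSpan_eq_span_vsub_set_right ℝ (Finset.mem_coe.2 ha)
  set I : Finset (Fin d → ℝ) := G.image (· - a) with hI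
  have hIcoe : ((· -ᵥ a) '' (G : Set (Fin d → ℝ))) = (I : Set (Fin d → ℝ)) := by
    rw [hI, Finset.coe_image]
    rfl
  have h0I : (0 : Fin d → ℝ) ∈ I := by
    rw [hI, Finset.mem_image]
    exact ⟨a, ha, by simp⟩
  have hins : I = insert 0 (I.erase 0) := (Finset.insert_erase h0I).symm
  have hspan : Submodule.span ℝ (I : Set (Fin d → ℝ))
      = Submodule.span ℝ ((I.erase 0 : Finset (Fin d → ℝ)) : Set (Fin d → ℝ)) := by
    conv_lhs => rw [hins]
    rw [Finset.coe_insert, Submodule.span_insert_zero]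
  have h1 : Module.finrank ℝ (vectorSpan ℝ (G : Set (Fin d → ℝ))) ≤ (I.erase 0).card := by
    rw [hvs, hIcoe, hspan]
    exact finrank_span_finset_le_card (I.erase 0)
  have h2 : (I.erase 0).card = I.card - 1 := Finset.card_erase_of_mem h0I
  have h3 : I.card ≤ G.card := Finset.card_image_le
  have h4 : 1 ≤ I.card := Finset.card_pos.2 ⟨0, h0I⟩
  omega

lemma freiman_key (A : Finset (Fin d → ℝ)) :
    2 * (((A + A).card : ℤ))
      ≥ 2 * (Module.finrank ℝ (vectorSpan ℝ (A : Set (Fin d → ℝ))) + 1) * A.card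
        - Module.finrank ℝ (vectorSpan ℝ (A : Set (Fin d → ℝ)))
          * (Module.finrank ℝ (vectorSpan ℝ (A : Set (Fin d → ℝ))) + 1) := by
  classical
  induction A using Finset.strongInduction with
  | _ A IH =>
  rcases A.eq_empty_or_nonempty with rfl | hne
  · simp
  obtain ⟨a, haA, haK⟩ := exists_extreme_pt A hne
  set A' := A.erase a with hA'
  set K := convexHull ℝ (A' : Set (Fin d → ℝ)) with hKdef
  have hIH := IH A' (Finset.erase_ssubset haA)
  have hcard' : (A'.card : ℤ) = (A.card : ℤ) - 1 := by
    rw [hA', Finset.card_erase_of_mem haA]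
    have : 1 ≤ A.card := Finset.card_pos.2 hne
    push_cast [Nat.cast_sub this]
    ring
  have hsub1 : A' + A' ⊆ A + A :=
    Finset.add_subset_add (A.erase_subset a) (A.erase_subset a)
  set k := Module.finrank ℝ (vectorSpan ℝ (A : Set (Fin d → ℝ))) with hk
  set k' := Module.finrank ℝ (vectorSpan ℝ (A' : Set (Fin d → ℝ))) with hk'
  by_cases hsp : a ∈ affineSpan ℝ (A' : Set (Fin d → ℝ))
  · -- Case 1 : A' spans the same affine subspace
    have hins : (A : Set (Fin d → ℝ)) = insert a (A' : Set (Fin d → ℝ)) := by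
      rw [hA', ← Finset.coe_insert, Finset.insert_erase haA]
    have hspan_eq : affineSpan ℝ (A : Set (Fin d → ℝ)) = affineSpan ℝ (A' : Set (Fin d → ℝ)) := by
      rw [hins]
      exact affineSpan_insert_eq_affineSpan ℝ hsp
    have hkk' : k = k' := by
      rw [hk, hk', ← direction_affineSpan, ← direction_affineSpan, hspan_eq]
    -- the set G₀ of good points
    set G₀ := A.filter (fun x => (2:ℝ)⁻¹ • (a + x) ∉ K) with hG₀def
    have hG₀spec : ∀ x, x ∈ G₀ ↔ x ∈ A ∧ (2:ℝ)⁻¹ • (a + x) ∉ K := by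
      intro x; rw [hG₀def, Finset.mem_filter]
    have hGsub : (A : Set (Fin d → ℝ)) ⊆ (affineSpan ℝ (G₀ : Set (Fin d → ℝ)) : Set _) :=
      span_G A G₀ a haA haK hG₀spec
    have haG : a ∈ G₀ := by
      rw [hG₀spec]
      refine ⟨haA, ?_⟩
      have : (2:ℝ)⁻¹ • (a + a) = a := by rw [← two_smul ℝ a, smul_smul]; norm_num
      rw [this]; exact haK
    -- rank bound : G₀.card ≥ k + 1
    have hrank_le : k ≤ Module.finrank ℝ (vectorSpan ℝ (G₀ : Set (Fin d → ℝ))) := by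
      rw [hk, ← direction_affineSpan, ← direction_affineSpan]
      exact Submodule.finrank_mono (AffineSubspace.direction_le (affineSpan_le.2 hGsub))
    have hGcard : k + 1 ≤ G₀.card :=
      le_trans (by omega) (le_trans (Nat.add_le_add_right hrank_le 1) (card_ge_finrank_succ G₀ a haG))
    -- counting : A+A contains A'+A' and a + G₀ disjointly
    set N := G₀.image (fun x => a + x) with hN
    have hNcard : N.card = G₀.card := Finset.card_image_of_injective _ (add_right_injective a)
    have hNsub : N ⊆ A + A := by
      intro b hb
      rw [hN, Finset.mem_image] at hb
      obtain ⟨x, hx, rfl⟩ := hb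
      exact Finset.add_mem_add haA ((hG₀spec x).1 hx).1
    have hdisj : Disjoint (A' + A') N := by
      rw [Finset.disjoint_right]
      intro b hbN hbA'
      rw [hN, Finset.mem_image] at hbN
      obtain ⟨x, hx, rfl⟩ := hbN
      rw [Finset.mem_add] at hbA'
      obtain ⟨y, hy, z, hz, hyz⟩ := hbA'
      have hmid : (2:ℝ)⁻¹ • (a + x) ∈ K := by
        rw [← hyz]
        have h2 : (2:ℝ)⁻¹ • (y + z) = (2:ℝ)⁻¹ • y + (2:ℝ)⁻¹ • z := smul_add _ _ _
        rw [h2]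
        exact (convex_convexHull ℝ (A' : Set (Fin d → ℝ)))
          (subset_convexHull ℝ _ hy) (subset_convexHull ℝ _ hz)
          (by norm_num) (by norm_num) (by norm_num)
      exact ((hG₀spec x).1 hx).2 hmid
    have hcount : (A' + A').card + G₀.card ≤ (A + A).card := by
      rw [← hNcard, ← Finset.card_union_of_disjoint hdisj]
      exact Finset.card_le_card (Finset.union_subset hsub1 hNsub)
    -- arithmetic
    rw [← hkk'] at hIH
    have hG' : ((k : ℤ) + 1) ≤ (G₀.card : ℤ) := by exact_mod_cast hGcard
    have hc' : ((A' + A').card : ℤ) + (G₀.card : ℤ) ≤ ((A + A).card : ℤ) := by exact_mod_cast hcount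
    have hring : 2 * ((k : ℤ) + 1) * ((A.card : ℤ) - 1) - k * (k + 1) + 2 * (k + 1)
        = 2 * (k + 1) * (A.card : ℤ) - k * (k + 1) := by ring
    rw [hcard'] at hIH
    push_cast
    push_cast at hIH
    linarith
  · -- Case 2 : a is affinely independent from A'
    rcases A'.eq_empty_or_nonempty with hA'e | ⟨b, hbA'⟩
    · -- A = {a}
      have hA1 : A = {a} := by
        have := Finset.insert_erase haA
        rw [hA'] at hA'e
        rw [← this, hA'e]
        rfl
      subst hA1
      have h1 : ({a} + {a} : Finset (Fin d → ℝ)) = {a + a} := by simp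
      rw [h1]
      have h2 : vectorSpan ℝ (({a} : Finset (Fin d → ℝ)) : Set (Fin d → ℝ)) = ⊥ := by
        rw [Finset.coe_singleton]
        exact vectorSpan_singleton ℝ a
      rw [hk] at *
      rw [h2]
      simp
    · -- rank : k = k' + 1
      have hbspan : b ∈ affineSpan ℝ (A' : Set (Fin d → ℝ)) := subset_affineSpan ℝ _ hbA'
      have hins : (A : Set (Fin d → ℝ)) = insert a (A' : Set (Fin d → ℝ)) := by
        rw [hA', ← Finset.coe_insert, Finset.insert_erase haA]
      have hdir : vectorSpan ℝ (A : Set (Fin d → ℝ))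
          = Submodule.span ℝ {a -ᵥ b} ⊔ (affineSpan ℝ (A' : Set (Fin d → ℝ))).direction := by
        rw [← direction_affineSpan, hins, ← affineSpan_insert_affineSpan]
        exact AffineSubspace.direction_affineSpan_insert hbspan
      have hvne : a -ᵥ b ≠ 0 := by
        intro h
        rw [vsub_eq_zero_iff_eq] at h
        exact hsp (h ▸ hbspan)
      have hinf : Submodule.span ℝ {a -ᵥ b} ⊓ (affineSpan ℝ (A' : Set (Fin d → ℝ))).direction = ⊥ := by
        rw [Submodule.eq_bot_iff]
        intro u hu
        obtain ⟨hu1, hu2⟩ := Submodule.mem_inf.1 hu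
        obtain ⟨r, hr⟩ := Submodule.mem_span_singleton.1 hu1
        by_contra hu0
        have hr0 : r ≠ 0 := by
          intro h; rw [h, zero_smul] at hr; exact hu0 hr.symm
        have hvmem : a -ᵥ b ∈ (affineSpan ℝ (A' : Set (Fin d → ℝ))).direction := by
          have := Submodule.smul_mem _ r⁻¹ hu2
          rw [← hr, smul_smul, inv_mul_cancel₀ hr0, one_smul] at this
          exact this
        have : a ∈ affineSpan ℝ (A' : Set (Fin d → ℝ)) := by
          have := AffineSubspace.vadd_mem_of_mem_direction hvmem hbspan
          rwa [vsub_vadd] at this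
        exact hsp this
      have hkk' : (k : ℤ) = (k' : ℤ) + 1 := by
        have := Submodule.finrank_sup_add_finrank_inf_eq
          (Submodule.span ℝ {a -ᵥ b}) (affineSpan ℝ (A' : Set (Fin d → ℝ))).direction
        rw [hinf, finrank_bot, finrank_span_singleton hvne] at this
        rw [hk, hk', hdir, ← direction_affineSpan]
        push_cast
        omega
      -- counting : all sums a + x are new
      set N := A.image (fun x => a + x) with hN
      have hNcard : N.card = A.card := Finset.card_image_of_injective _ (add_right_injective a)
      have hNsub : N ⊆ A + A := by
        intro c hc
        rw [hN, Finset.mem_image] at hc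
        obtain ⟨x, hx, rfl⟩ := hc
        exact Finset.add_mem_add haA hx
      have hdisj : Disjoint (A' + A') N := by
        rw [Finset.disjoint_right]
        intro c hcN hcA'
        rw [hN, Finset.mem_image] at hcN
        obtain ⟨x, hx, rfl⟩ := hcN
        rw [Finset.mem_add] at hcA'
        obtain ⟨y, hy, z, hz, hyz⟩ := hcA'
        have hyS : y ∈ affineSpan ℝ (A' : Set (Fin d → ℝ)) := subset_affineSpan ℝ _ hy
        have hzS : z ∈ affineSpan ℝ (A' : Set (Fin d → ℝ)) := subset_affineSpan ℝ _ hz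
        by_cases hxa : x = a
        · rw [hxa] at hyz
          have hmem := (affineSpan ℝ (A' : Set (Fin d → ℝ))).smul_vsub_vadd_mem
            ((2:ℝ)⁻¹) hzS hyS hyS
          have heq : (2:ℝ)⁻¹ • (z -ᵥ y) +ᵥ y = a := by
            funext i
            have h9 := congrFun hyz i
            simp only [Pi.add_apply] at h9
            show (2:ℝ)⁻¹ • (z i - y i) + y i = a i
            simp only [smul_eq_mul]
            linarith
          rw [heq] at hmem
          exact hsp hmem
        · have hxA' : x ∈ A' := Finset.mem_erase.2 ⟨hxa, hx⟩
          have hxS : x ∈ affineSpan ℝ (A' : Set (Fin d → ℝ)) := subset_affineSpan ℝ _ hxA'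
          have hmem := (affineSpan ℝ (A' : Set (Fin d → ℝ))).smul_vsub_vadd_mem
            (1:ℝ) hzS hxS hyS
          have heq : (1:ℝ) • (z -ᵥ x) +ᵥ y = a := by
            funext i
            have h9 := congrFun hyz i
            simp only [Pi.add_apply] at h9
            show (1:ℝ) • (z i - x i) + y i = a i
            simp only [smul_eq_mul]
            linarith
          rw [heq] at hmem
          exact hsp hmem
      have hcount : (A' + A').card + A.card ≤ (A + A).card := by
        rw [← hNcard, ← Finset.card_union_of_disjoint hdisj]
        exact Finset.card_le_card (Finset.union_subset hsub1 hNsub)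
      have hc' : ((A' + A').card : ℤ) + (A.card : ℤ) ≤ ((A + A).card : ℤ) := by exact_mod_cast hcount
      rw [hcard'] at hIH
      push_cast
      push_cast at hIH
      rw [hkk']
      nlinarith [hIH, hc']

theorem freiman_dimension_bound (d m : ℕ) (A : Finset (Fin d → ℝ))
    (hm : A.card = m)
    (hA : affineSpan ℝ (A : Set (Fin d → ℝ)) = ⊤) :
    ((A + A).card : ℤ) ≥ m * (d + 1) - d * (d + 1) / 2 := by
  have hvs : vectorSpan ℝ (A : Set (Fin d → ℝ)) = ⊤ := by
    rw [← direction_affineSpan, hA]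
    exact AffineSubspace.direction_top ℝ _ _
  have hfr : Module.finrank ℝ (vectorSpan ℝ (A : Set (Fin d → ℝ))) = d := by
    rw [hvs]
    simp
  have hkey := freiman_key A
  rw [hfr, hm] at hkey
  have h2 : 2 * (((A + A).card : ℤ)) ≥ 2 * ((d : ℤ) + 1) * m - d * (d + 1) := by
    exact_mod_cast hkey
  have h3 : 2 * ((d : ℤ) + 1) * m = 2 * (m * (d + 1)) := by ring
  rw [h3] at h2
  omega
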